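/- Let N ≥ 3 be odd and let Γ = {−(N−1)/2, …, (N−1)/2}² ⊂ ℤ² be the centered N×N square domain. The function H(x,y) = x·y is harmonic on all of ℤ²; the greatest common divisor of its values {u·v : (u,v) ∈ Γ} equals 1; and (N+1)/2 divides u·v for every (u,v) ∈ ∂(ℤ² \ Γ). -/
import Mathlib


/-- Two vertices of `ℤ²` are adjacent iff their Euclidean distance is `1`. -/
def adj (u v : ℤ × ℤ) : Prop := (u.1 - v.1) ^ 2 + (u.2 - v.2) ^ 2 = 1

lemma adj_iff (w v : ℤ × ℤ) :
    adj w v ↔ w = (v.1 + 1, v.2) ∨ w = (v.1 - 1, v.2) ∨ w = (v.1, v.2 + 1) ∨ w = (v.1, v.2 - 1) := by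
  obtain ⟨x, y⟩ := w
  obtain ⟨p, q⟩ := v
  simp only [adj, Prod.mk.injEq]
  constructor
  · intro h
    have ha : x - p = -1 ∨ x - p = 0 ∨ x - p = 1 := by
      have h1 : (x - p) ^ 2 ≤ 1 := by nlinarith [sq_nonneg (y - q)]
      have h2 : x - p ≤ 1 := by nlinarith [sq_nonneg (x - p - 1)]
      have h3 : -1 ≤ x - p := by nlinarith [sq_nonneg (x - p + 1)]
      omega
    have hb : y - q = -1 ∨ y - q = 0 ∨ y - q = 1 := by
      have h1 : (y - q) ^ 2 ≤ 1 := by nlinarith [sq_nonneg (x - p)]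
      have h2 : y - q ≤ 1 := by nlinarith [sq_nonneg (y - q - 1)]
      have h3 : -1 ≤ y - q := by nlinarith [sq_nonneg (y - q + 1)]
      omega
    rcases ha with ha | ha | ha <;> rcases hb with hb | hb | hb <;>
      rw [ha, hb] at h <;> norm_num at h <;> omega
  · rintro (⟨h1, h2⟩ | ⟨h1, h2⟩ | ⟨h1, h2⟩ | ⟨h1, h2⟩) <;> subst h1 <;> subst h2 <;> ring

/-- Let `N ≥ 3` be odd and `Γ = {−(N−1)/2, …, (N−1)/2}²` the
centered `N×N` square domain. Then `H(x,y) = x·y` is harmonic on all of `ℤ²`,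
the gcd of its values on `Γ` is `1`, and `(N+1)/2` divides `u·v` for every
`(u,v) ∈ ∂(ℤ² \ Γ)`. -/
theorem xy_harmonic_coprime_divisible (N : ℕ) (hodd : Odd N) (hN : 3 ≤ N) :
    (∀ v : ℤ × ℤ, (∑ᶠ w ∈ {w : ℤ × ℤ | adj w v}, w.1 * w.2) = 4 * (v.1 * v.2)) ∧
    Finset.gcd
      (Finset.Icc (-(((N : ℤ) - 1) / 2)) (((N : ℤ) - 1) / 2) ×ˢ
        Finset.Icc (-(((N : ℤ) - 1) / 2)) (((N : ℤ) - 1) / 2))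
      (fun v : ℤ × ℤ => v.1 * v.2) = 1 ∧
    ∀ w : ℤ × ℤ,
      w ∉ (Finset.Icc (-(((N : ℤ) - 1) / 2)) (((N : ℤ) - 1) / 2) ×ˢ
        Finset.Icc (-(((N : ℤ) - 1) / 2)) (((N : ℤ) - 1) / 2)) →
      (∃ v ∈ (Finset.Icc (-(((N : ℤ) - 1) / 2)) (((N : ℤ) - 1) / 2) ×ˢ
        Finset.Icc (-(((N : ℤ) - 1) / 2)) (((N : ℤ) - 1) / 2)), adj w v) →
      ((N : ℤ) + 1) / 2 ∣ w.1 * w.2 := by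
  obtain ⟨t, ht⟩ := hodd
  have hNt : (N : ℤ) = 2 * t + 1 := by exact_mod_cast ht
  have hk : (((N : ℤ) - 1) / 2) = (t : ℤ) := by omega
  have hk' : (((N : ℤ) + 1) / 2) = (t : ℤ) + 1 := by omega
  have ht1 : 1 ≤ (t : ℤ) := by omega
  refine ⟨?_, ?_, ?_⟩
  · intro v
    have hset : {w : ℤ × ℤ | adj w v} =
        ↑({(v.1 + 1, v.2), (v.1 - 1, v.2), (v.1, v.2 + 1), (v.1, v.2 - 1)} : Finset (ℤ × ℤ)) := by
      ext w
      simp [adj_iff, Set.mem_setOf_eq]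
    rw [hset, finsum_mem_coe_finset]
    have h1 : ((v.1 + 1, v.2) : ℤ × ℤ) ∉
        ({(v.1 - 1, v.2), (v.1, v.2 + 1), (v.1, v.2 - 1)} : Finset (ℤ × ℤ)) := by
      simp only [Finset.mem_insert, Finset.mem_singleton, Prod.ext_iff]; omega
    have h2 : ((v.1 - 1, v.2) : ℤ × ℤ) ∉
        ({(v.1, v.2 + 1), (v.1, v.2 - 1)} : Finset (ℤ × ℤ)) := by
      simp only [Finset.mem_insert, Finset.mem_singleton, Prod.ext_iff]; omega
    have h3 : ((v.1, v.2 + 1) : ℤ × ℤ) ∉ ({(v.1, v.2 - 1)} : Finset (ℤ × ℤ)) := by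
      simp only [Finset.mem_singleton, Prod.ext_iff]
      omega
    rw [Finset.sum_insert h1, Finset.sum_insert h2, Finset.sum_insert h3, Finset.sum_singleton]
    ring
  · have hmem : ((1 : ℤ), (1 : ℤ)) ∈
        (Finset.Icc (-(((N : ℤ) - 1) / 2)) (((N : ℤ) - 1) / 2) ×ˢ
          Finset.Icc (-(((N : ℤ) - 1) / 2)) (((N : ℤ) - 1) / 2)) := by
      simp only [Finset.mem_product, Finset.mem_Icc, hk]
      omega
    have hdvd := Finset.gcd_dvd (f := fun v : ℤ × ℤ => v.1 * v.2) hmem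
    simp only [mul_one] at hdvd
    have hnn : 0 ≤ Finset.gcd
        (Finset.Icc (-(((N : ℤ) - 1) / 2)) (((N : ℤ) - 1) / 2) ×ˢ
          Finset.Icc (-(((N : ℤ) - 1) / 2)) (((N : ℤ) - 1) / 2))
        (fun v : ℤ × ℤ => v.1 * v.2) := by
      have := Finset.normalize_gcd (s := Finset.Icc (-(((N : ℤ) - 1) / 2)) (((N : ℤ) - 1) / 2) ×ˢ
          Finset.Icc (-(((N : ℤ) - 1) / 2)) (((N : ℤ) - 1) / 2)) (f := fun v : ℤ × ℤ => v.1 * v.2)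
      rw [← this, ← Int.abs_eq_normalize]
      exact abs_nonneg _
    exact Int.eq_one_of_dvd_one hnn hdvd
  · rintro w hw ⟨v, hv, hadj⟩
    rw [hk'] 
    simp only [Finset.mem_product, Finset.mem_Icc, hk] at hw hv
    rcases (adj_iff w v).mp hadj with h | h | h | h <;> subst h <;> simp only at hw ⊢
    · have : v.1 + 1 = (t : ℤ) + 1 := by omega
      rw [this]; exact dvd_mul_right _ _
    · have : v.1 - 1 = -((t : ℤ) + 1) := by omega
      rw [this]; exact ⟨-v.2, by ring⟩
    · have : v.2 + 1 = (t : ℤ) + 1 := by omega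
      rw [this]; exact dvd_mul_left _ _
    · have : v.2 - 1 = -((t : ℤ) + 1) := by omega
      rw [this]; exact ⟨-v.1, by ring⟩
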